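/- For every integer j ≥ 0, setting ℓ = 12j+8 and k = 18j+10, the coefficients of the Gaussian polynomial binom{ℓ+3}{3}_q satisfy p_k(ℓ,3) = p_{k+1}(ℓ,3); that is, strict increase fails at these infinitely many points in the first half of the coefficient sequence. -/

import Mathlib

/-- The coefficient of `q^k` in the Gaussian polynomial (q-binomial coefficient)
`binom{ℓ+m}{m}_q = ∏_{i=1}^m (1-q^(ℓ+i))/(1-q^i)`, computed in `ℚ⟦q⟧`. -/
noncomputable def gaussCoeff (ℓ m k : ℕ) : ℚ :=
  PowerSeries.coeff k
    ((∏ i ∈ Finset.range m, (1 - (PowerSeries.X : PowerSeries ℚ) ^ (ℓ + i + 1))) *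
     (∏ i ∈ Finset.range m, (1 - (PowerSeries.X : PowerSeries ℚ) ^ (i + 1)))⁻¹)

namespace GaussAux

open PowerSeries

/-- Number of ways to write `n` as `2a+3b`. -/
def f (n : ℕ) : ℕ := n / 6 + if n % 6 = 1 then 0 else 1

/-- The power series `1/((1-X^2)(1-X^3))`. -/
noncomputable def HS : PowerSeries ℚ := PowerSeries.mk fun n => (f n : ℚ)

lemma coeff_HS (n : ℕ) : PowerSeries.coeff n HS = (f n : ℚ) := coeff_mk _ _

lemma key1 : ((1 - X ^ 2) * (1 - X ^ 3) : PowerSeries ℚ) * HS = 1 := by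
  have h : ((1 - X ^ 2) * (1 - X ^ 3) : PowerSeries ℚ) * HS
      = HS - X ^ 2 * HS - X ^ 3 * HS + X ^ 5 * HS := by ring
  rw [h]
  ext n
  simp only [map_add, map_sub, coeff_X_pow_mul', coeff_HS, coeff_one]
  by_cases hn : n ≤ 4
  · interval_cases n <;> norm_num [f]
  · push_neg at hn
    rw [if_pos (by omega), if_pos (by omega), if_pos (by omega), if_neg (by omega)]
    have hf : f n + f (n - 5) = f (n - 2) + f (n - 3) := by
      unfold f; split_ifs <;> omega
    have : ((f n + f (n - 5) : ℕ) : ℚ) = ((f (n - 2) + f (n - 3) : ℕ) : ℚ) := by rw [hf]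
    push_cast at this
    linarith

end GaussAux

namespace GaussAux

open PowerSeries

lemma hP3 : (∏ i ∈ Finset.range 3, (1 - (X : PowerSeries ℚ) ^ (i + 1)))
    = (1 - X) * (1 - X ^ 2) * (1 - X ^ 3) := by
  simp [Finset.prod_range_succ]

lemma key2 : (1 - X) * (∏ i ∈ Finset.range 3, (1 - (X : PowerSeries ℚ) ^ (i + 1)))⁻¹ = HS := by
  set P := ∏ i ∈ Finset.range 3, (1 - (X : PowerSeries ℚ) ^ (i + 1)) with hP
  have hc : PowerSeries.constantCoeff P ≠ 0 := by
    rw [hP, hP3]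
    simp
  have hPH : P * HS = 1 - X := by
    rw [hP, hP3, mul_assoc, mul_assoc, ← mul_assoc (1 - X ^ 2), key1, mul_one]
  have hinv : P * P⁻¹ = 1 := PowerSeries.mul_inv_cancel _ hc
  calc (1 - X) * P⁻¹ = (P * HS) * P⁻¹ := by rw [hPH]
    _ = HS * (P * P⁻¹) := by ring
    _ = HS := by rw [hinv, mul_one]

end GaussAux

/-- Infinite family of failures of strict increase for binom{ℓ+3}{3}_q. -/
theorem strict_increase_fails (j : ℕ) :
    gaussCoeff (12 * j + 8) 3 (18 * j + 10) = gaussCoeff (12 * j + 8) 3 (18 * j + 11) := by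
  open PowerSeries GaussAux in
  show PowerSeries.coeff (18 * j + 10) _ = PowerSeries.coeff (18 * j + 11) _
  set N := ∏ i ∈ Finset.range 3, (1 - (X : PowerSeries ℚ) ^ (12 * j + 8 + i + 1)) with hNdef
  set P := ∏ i ∈ Finset.range 3, (1 - (X : PowerSeries ℚ) ^ (i + 1)) with hPdef
  have h2 : (1 - X) * (N * P⁻¹) = N * HS := by
    rw [show (1 - X) * (N * P⁻¹) = N * ((1 - X) * P⁻¹) by ring, key2]
  have h1 : PowerSeries.coeff (18 * j + 11) ((1 - X) * (N * P⁻¹))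
      = PowerSeries.coeff (18 * j + 11) (N * P⁻¹)
        - PowerSeries.coeff (18 * j + 10) (N * P⁻¹) := by
    rw [sub_mul, one_mul, map_sub, coeff_succ_X_mul]
  have hN : N * HS = HS - X ^ (12 * j + 9) * HS - X ^ (12 * j + 10) * HS
      - X ^ (12 * j + 11) * HS + X ^ (24 * j + 19) * HS + X ^ (24 * j + 20) * HS
      + X ^ (24 * j + 21) * HS - X ^ (36 * j + 30) * HS := by
    rw [hNdef]
    simp only [Finset.prod_range_succ, Finset.prod_range_zero]
    rw [show 24 * j + 19 = (12 * j + 9) + (12 * j + 10) by ring,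
      show 24 * j + 20 = (12 * j + 9) + (12 * j + 11) by ring,
      show 24 * j + 21 = (12 * j + 10) + (12 * j + 11) by ring,
      show 36 * j + 30 = (12 * j + 9) + ((12 * j + 10) + (12 * j + 11)) by ring,
      show 12 * j + 8 + 0 + 1 = 12 * j + 9 by ring,
      show 12 * j + 8 + 1 + 1 = 12 * j + 10 by ring,
      show 12 * j + 8 + 2 + 1 = 12 * j + 11 by ring]
    simp only [pow_add]
    ring
  have hz : PowerSeries.coeff (18 * j + 11) (N * HS) = 0 := by
    rw [hN]
    simp only [map_add, map_sub, coeff_X_pow_mul', coeff_HS]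
    rw [if_pos (by omega : 12 * j + 9 ≤ 18 * j + 11),
      if_pos (by omega : 12 * j + 10 ≤ 18 * j + 11),
      if_pos (by omega : 12 * j + 11 ≤ 18 * j + 11),
      if_neg (by omega : ¬ 24 * j + 19 ≤ 18 * j + 11),
      if_neg (by omega : ¬ 24 * j + 20 ≤ 18 * j + 11),
      if_neg (by omega : ¬ 24 * j + 21 ≤ 18 * j + 11),
      if_neg (by omega : ¬ 36 * j + 30 ≤ 18 * j + 11),
      show 18 * j + 11 - (12 * j + 9) = 6 * j + 2 by omega,
      show 18 * j + 11 - (12 * j + 10) = 6 * j + 1 by omega,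
      show 18 * j + 11 - (12 * j + 11) = 6 * j by omega]
    have e0 : f (18 * j + 11) = 3 * j + 2 := by unfold f; split_ifs <;> omega
    have e1 : f (6 * j + 2) = j + 1 := by unfold f; split_ifs <;> omega
    have e2 : f (6 * j + 1) = j := by unfold f; split_ifs <;> omega
    have e3 : f (6 * j) = j + 1 := by unfold f; split_ifs <;> omega
    rw [e0, e1, e2, e3]
    push_cast
    ring
  rw [h2] at h1
  rw [hz] at h1
  linarith
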